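/- Under the same hypotheses, if (x(t), π(t)) is any solution of Hamilton's equations for h = (1/2)|π|² + V + Q_ψ, then δπ(t) := π(t) − p_B(x(t),t) satisfies the linear ODE d(δπ_j)/dt = −Σ_k ∂_k p_{B,j}(x(t),t)·δπ_k(t). In particular if π(0) = p_B(x(0),0) then π(t) = p_B(x(t),t) for all t. -/

import Mathlib

open Complex

noncomputable section
namespace S15

lemma hasFDerivAt_cdiv {P : Type*} [NormedAddCommGroup P] [NormedSpace ℝ P]
    {f g : P → ℂ} {F' G' : P →L[ℝ] ℂ} {p : P} (hf : HasFDerivAt f F' p)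
    (hg : HasFDerivAt g G' p) (hz : g p ≠ 0) :
    HasFDerivAt (fun q => f q / g q) ((g p)⁻¹ • F' - (f p / (g p)^2) • G') p := by
  have hinv : HasFDerivAt (fun q => (g q)⁻¹)
      ((-ContinuousLinearMap.mulLeftRight ℝ ℂ (g p)⁻¹ (g p)⁻¹).comp G') p :=
    (hasFDerivAt_inv' hz).comp p hg
  have := hf.fun_mul hinv
  simp only [div_eq_mul_inv]
  convert! this using 1
  ext w
  simp [ContinuousLinearMap.mulLeftRight_apply]
  field_simp
  ring

variable {n : ℕ} {F : Type*} [NormedAddCommGroup F] [NormedSpace ℝ F]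

lemma hasFDerivAt_slice {f : ((Fin n → ℝ) × ℝ) → F} {p : (Fin n → ℝ) × ℝ}
    {L : ((Fin n → ℝ) × ℝ) →L[ℝ] F} (hf : HasFDerivAt f L p) :
    HasFDerivAt (fun y => f (y, p.2)) (L.comp (ContinuousLinearMap.inl ℝ (Fin n → ℝ) ℝ)) p.1 :=
  hf.comp p.1 (hasFDerivAt_prodMk_left p.1 p.2)

lemma hasDerivAt_slice {f : ((Fin n → ℝ) × ℝ) → F} {p : (Fin n → ℝ) × ℝ}
    {L : ((Fin n → ℝ) × ℝ) →L[ℝ] F} (hf : HasFDerivAt f L p) :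
    HasDerivAt (fun s => f (p.1, s)) (L (0, 1)) p.2 := by
  have h : HasFDerivAt (fun s : ℝ => f (p.1, s)) (L.comp (ContinuousLinearMap.inr ℝ (Fin n → ℝ) ℝ)) p.2 :=
    hf.comp p.2 (hasFDerivAt_prodMk_right p.1 p.2)
  simpa using h.hasDerivAt

def Psi (ψ : (Fin n → ℝ) → ℝ → ℂ) : (Fin n → ℝ) × ℝ → ℂ := fun q => ψ q.1 q.2
def Gd (ψ : (Fin n → ℝ) → ℝ → ℂ) := fderiv ℝ (Psi ψ)
def Hd (ψ : (Fin n → ℝ) → ℝ → ℂ) := fderiv ℝ (Gd ψ)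
def uF (ψ : (Fin n → ℝ) → ℝ → ℂ) (v : (Fin n → ℝ) × ℝ) (p : (Fin n → ℝ) × ℝ) : ℂ :=
  Gd ψ p v / Psi ψ p
def TF (ψ : (Fin n → ℝ) → ℝ → ℂ) (p v w : (Fin n → ℝ) × ℝ) : ℂ :=
  Hd ψ p v w / Psi ψ p - (Gd ψ p v) * (Gd ψ p w) / (Psi ψ p)^2
def DuF (ψ : (Fin n → ℝ) → ℝ → ℂ) (p v : (Fin n → ℝ) × ℝ) : ((Fin n → ℝ) × ℝ) →L[ℝ] ℂ :=
  (Psi ψ p)⁻¹ • ((ContinuousLinearMap.apply ℝ ℂ v).comp (Hd ψ p))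
    - (Gd ψ p v / (Psi ψ p)^2) • (Gd ψ p)
def Rf (ψ : (Fin n → ℝ) → ℝ → ℂ) (p : (Fin n → ℝ) × ℝ) : ℝ := ‖Psi ψ p‖
def DR (ψ : (Fin n → ℝ) → ℝ → ℂ) (p : (Fin n → ℝ) × ℝ) : ((Fin n → ℝ) × ℝ) →L[ℝ] ℝ :=
  (Rf ψ p)⁻¹ • ((Psi ψ p).re • (Complex.reCLM.comp (Gd ψ p))
    + (Psi ψ p).im • (Complex.imCLM.comp (Gd ψ p)))

variable {ψ : (Fin n → ℝ) → ℝ → ℂ}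

theorem DuF_apply (p v w) : DuF ψ p v w = TF ψ p w v := by
  simp [DuF, TF, ContinuousLinearMap.apply]
  ring

theorem contDiff_G (hψsm : ContDiff ℝ 3 (Psi ψ)) : ContDiff ℝ 2 (Gd ψ) :=
  hψsm.fderiv_right (by norm_num)

theorem hasFDerivAt_G (hψsm : ContDiff ℝ 3 (Psi ψ)) (p) : HasFDerivAt (Gd ψ) (Hd ψ p) p :=
  ((contDiff_G hψsm).differentiable (by norm_num)).differentiableAt.hasFDerivAt

theorem hasFDerivAt_Psi (hψsm : ContDiff ℝ 3 (Psi ψ)) (p) : HasFDerivAt (Psi ψ) (Gd ψ p) p :=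
  ((hψsm.differentiable (by norm_num)) p).hasFDerivAt

theorem Hd_symm (hψsm : ContDiff ℝ 3 (Psi ψ)) (p v w) : Hd ψ p v w = Hd ψ p w v :=
  second_derivative_symmetric (fun y => hasFDerivAt_Psi hψsm y) (hasFDerivAt_G hψsm p) v w

theorem TF_symm (hψsm : ContDiff ℝ 3 (Psi ψ)) (p v w) : TF ψ p v w = TF ψ p w v := by
  simp only [TF, Hd_symm hψsm p v w]; ring

theorem hasFDerivAt_uF (hψsm : ContDiff ℝ 3 (Psi ψ)) (hne : ∀ x t, ψ x t ≠ 0) (p v) :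
    HasFDerivAt (uF ψ v) (DuF ψ p v) p := by
  have h1 : HasFDerivAt (fun q => Gd ψ q v)
      ((ContinuousLinearMap.apply ℝ ℂ v).comp (Hd ψ p)) p :=
    (ContinuousLinearMap.apply ℝ ℂ v).hasFDerivAt.comp p (hasFDerivAt_G hψsm p)
  exact hasFDerivAt_cdiv h1 (hasFDerivAt_Psi hψsm p) (hne p.1 p.2)

theorem hasFDerivAt_Rf (hψsm : ContDiff ℝ 3 (Psi ψ)) (hne : ∀ x t, ψ x t ≠ 0) (p) :
    HasFDerivAt (Rf ψ) (DR ψ p) p := by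
  have hre : HasFDerivAt (fun q => (Psi ψ q).re) (Complex.reCLM.comp (Gd ψ p)) p :=
    Complex.reCLM.hasFDerivAt.comp p (hasFDerivAt_Psi hψsm p)
  have him : HasFDerivAt (fun q => (Psi ψ q).im) (Complex.imCLM.comp (Gd ψ p)) p :=
    Complex.imCLM.hasFDerivAt.comp p (hasFDerivAt_Psi hψsm p)
  have hN : HasFDerivAt (fun q => Complex.normSq (Psi ψ q))
      ((Psi ψ p).re • (Complex.reCLM.comp (Gd ψ p)) + (Psi ψ p).re • (Complex.reCLM.comp (Gd ψ p))
        + ((Psi ψ p).im • (Complex.imCLM.comp (Gd ψ p)) + (Psi ψ p).im • (Complex.imCLM.comp (Gd ψ p)))) p := by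
    have := (hre.fun_mul hre).fun_add (him.fun_mul him)
    simpa [Complex.normSq_apply] using this
  have hNz : Complex.normSq (Psi ψ p) ≠ 0 := by
    simpa [Complex.normSq_eq_zero, Psi] using hne p.1 p.2
  have hsq := (Real.hasDerivAt_sqrt hNz).comp_hasFDerivAt p hN
  have heq : (fun q => Real.sqrt (Complex.normSq (Psi ψ q))) = Rf ψ := by
    funext q; rw [Rf, Complex.norm_def]
  rw [show ((fun x => Real.sqrt x) ∘ fun q => Complex.normSq (Psi ψ q)) = Rf ψ from heq] at hsq
  have hR0 : Rf ψ p ≠ 0 := by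
    simp only [Rf, ne_eq, norm_eq_zero]; exact hne p.1 p.2
  have hRsq : Real.sqrt (Complex.normSq (Psi ψ p)) = Rf ψ p := by
    rw [Rf, Complex.norm_def]
  have hDR : DR ψ p = ((1 / (2 * Real.sqrt (Complex.normSq (Psi ψ p)))) •
      ((Psi ψ p).re • (Complex.reCLM.comp (Gd ψ p)) + (Psi ψ p).re • (Complex.reCLM.comp (Gd ψ p))
        + ((Psi ψ p).im • (Complex.imCLM.comp (Gd ψ p)) + (Psi ψ p).im • (Complex.imCLM.comp (Gd ψ p))))) := by
    rw [hRsq]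
    ext w <;>
    · simp only [DR, ContinuousLinearMap.smul_apply, ContinuousLinearMap.add_apply,
        ContinuousLinearMap.coe_comp', Function.comp_apply, smul_eq_mul,
        ContinuousLinearMap.comp_apply]
      field_simp
      ring
  rw [hDR]
  exact hsq

theorem Rf_ne (hne : ∀ x t, ψ x t ≠ 0) (p) : Rf ψ p ≠ 0 := by
  simp only [Rf, ne_eq, norm_eq_zero]; exact hne p.1 p.2

theorem re_uF (hne : ∀ x t, ψ x t ≠ 0) (p v) :
    (uF ψ v p).re = DR ψ p v / Rf ψ p := by
  have hR0 := Rf_ne hne p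
  have hsq : Rf ψ p * Rf ψ p = Complex.normSq (Psi ψ p) := by
    rw [Rf, Complex.norm_def, Real.mul_self_sqrt (Complex.normSq_nonneg _)]
  have hN0 : Complex.normSq (Psi ψ p) ≠ 0 := by
    simpa [Complex.normSq_eq_zero, Psi] using hne p.1 p.2
  have h1 : DR ψ p v / Rf ψ p
      = ((Gd ψ p v).re * (Psi ψ p).re + (Gd ψ p v).im * (Psi ψ p).im)
        / Complex.normSq (Psi ψ p) := by
    simp only [DR, ContinuousLinearMap.smul_apply, ContinuousLinearMap.add_apply,
      ContinuousLinearMap.coe_comp', Function.comp_apply, smul_eq_mul,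
      Complex.reCLM_apply, Complex.imCLM_apply]
    rw [← hsq]
    field_simp
  rw [h1, uF, Complex.div_re]
  ring

def ev {n : ℕ} (j : Fin n) : (Fin n → ℝ) × ℝ := (Pi.single j 1, 0)
def eT (n : ℕ) : (Fin n → ℝ) × ℝ := ((0 : Fin n → ℝ), (1 : ℝ))

def PF (ψ : (Fin n → ℝ) → ℝ → ℂ) (j : Fin n) (p : (Fin n → ℝ) × ℝ) : ℝ :=
  (uF ψ (ev j) p).im

theorem slice_G (hψsm : ContDiff ℝ 3 (Psi ψ)) (x : Fin n → ℝ) (t : ℝ) (v : Fin n → ℝ) :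
    fderiv ℝ (fun y => ψ y t) x v = Gd ψ (x, t) (v, 0) := by
  have h := hasFDerivAt_slice (p := (x, t)) (hasFDerivAt_Psi hψsm (x, t))
  have : fderiv ℝ (fun y => ψ y t) x = (Gd ψ (x,t)).comp (ContinuousLinearMap.inl ℝ (Fin n → ℝ) ℝ) :=
    h.fderiv
  rw [this]; rfl

theorem time_G (hψsm : ContDiff ℝ 3 (Psi ψ)) (x : Fin n → ℝ) (t : ℝ) :
    deriv (fun s => ψ x s) t = Gd ψ (x, t) (0, 1) :=
  (hasDerivAt_slice (p := (x, t)) (hasFDerivAt_Psi hψsm (x, t))).deriv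

theorem slice_H (hψsm : ContDiff ℝ 3 (Psi ψ)) (x : Fin n → ℝ) (t : ℝ) (j k : Fin n) :
    fderiv ℝ (fun y => fderiv ℝ (fun z => ψ z t) y (Pi.single j 1)) x (Pi.single k 1)
      = Hd ψ (x, t) (Pi.single k 1, 0) (Pi.single j 1, 0) := by
  have heq : (fun y => fderiv ℝ (fun z => ψ z t) y (Pi.single j 1))
      = fun y => Gd ψ (y, t) (Pi.single j 1, 0) := by
    funext y; exact slice_G hψsm y t _
  rw [heq]
  have h1 : HasFDerivAt (fun q => Gd ψ q (Pi.single j 1, (0:ℝ)))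
      ((ContinuousLinearMap.apply ℝ ℂ (Pi.single j 1, (0:ℝ))).comp (Hd ψ (x,t))) (x,t) := by
    exact (ContinuousLinearMap.apply ℝ ℂ _).hasFDerivAt.comp (x,t) (hasFDerivAt_G hψsm (x,t))
  have h2 := hasFDerivAt_slice (p := (x,t)) h1
  rw [h2.fderiv]; rfl

theorem hasFDerivAt_PF (hψsm : ContDiff ℝ 3 (Psi ψ)) (hne : ∀ x t, ψ x t ≠ 0) (j p) :
    HasFDerivAt (PF ψ j) (Complex.imCLM.comp (DuF ψ p (ev j))) p :=
  Complex.imCLM.hasFDerivAt.comp p (hasFDerivAt_uF hψsm hne p _)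

theorem continuous_TF (hψsm : ContDiff ℝ 3 (Psi ψ)) (hne : ∀ x t, ψ x t ≠ 0) (v w) :
    Continuous (fun p => TF ψ p v w) := by
  have hG : Continuous (Gd ψ) := (hψsm.continuous_fderiv (by norm_num))
  have hH : Continuous (Hd ψ) := ((contDiff_G hψsm).continuous_fderiv (by norm_num))
  have hPsi : Continuous (Psi ψ) := hψsm.continuous
  have h1 : Continuous fun p => Hd ψ p v w :=
    (hH.clm_apply continuous_const).clm_apply continuous_const
  have h2 : Continuous fun p => Gd ψ p v := hG.clm_apply continuous_const
  have h3 : Continuous fun p => Gd ψ p w := hG.clm_apply continuous_const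
  exact (h1.div hPsi (fun p => hne p.1 p.2)).sub
    ((h2.mul h3).div (hPsi.pow 2) (fun p => pow_ne_zero 2 (hne p.1 p.2)))

def SF (ψ : (Fin n → ℝ) → ℝ → ℂ) (V : (Fin n → ℝ) → ℝ) (p : (Fin n → ℝ) × ℝ) : ℂ :=
  (1/2 : ℂ) * (∑ k : Fin n, (TF ψ p (ev k) (ev k) + (uF ψ (ev k) p)^2)) - (V p.1 : ℂ)

variable {V : (Fin n → ℝ) → ℝ}

theorem schU (hψsm : ContDiff ℝ 3 (Psi ψ)) (hne : ∀ x t, ψ x t ≠ 0)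
    (hSch : ∀ x t, Complex.I * deriv (fun s => ψ x s) t
        = -(1 / 2) * (∑ j : Fin n, fderiv ℝ
              (fun y => fderiv ℝ (fun z => ψ z t) y (Pi.single j 1)) x
              (Pi.single j 1))
          + (V x : ℂ) * ψ x t) (p : (Fin n → ℝ) × ℝ) :
    uF ψ (eT n) p = Complex.I * SF ψ V p := by
  obtain ⟨x, t⟩ := p
  have hS := hSch x t
  rw [time_G hψsm x t] at hS
  rw [Finset.sum_congr rfl (fun k _ => slice_H hψsm x t k k)] at hS
  have hΨ : Psi ψ (x, t) ≠ 0 := hne x t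
  have hsum : ∑ k : Fin n, (TF ψ (x,t) (ev k) (ev k) + (uF ψ (ev k) (x,t))^2)
      = (∑ k : Fin n, Hd ψ (x,t) (ev k) (ev k)) / Psi ψ (x,t) := by
    rw [Finset.sum_div]
    apply Finset.sum_congr rfl
    intro k _
    rw [TF, uF, div_pow]
    field_simp
    ring
  have hS' : Complex.I * Gd ψ (x,t) (eT n)
      = -(1/2) * (∑ k : Fin n, Hd ψ (x,t) (ev k) (ev k)) + (V x : ℂ) * Psi ψ (x,t) := hS
  have hG : Gd ψ (x,t) (eT n)
      = Complex.I * ((1/2) * ∑ k : Fin n, Hd ψ (x,t) (ev k) (ev k))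
        - Complex.I * (V x : ℂ) * Psi ψ (x,t) := by
    linear_combination (-Complex.I) * hS'
      + (Gd ψ (x,t) (eT n)) * Complex.I_sq
  rw [uF, SF, hsum, hG]
  field_simp

theorem KEY {R Q : (Fin n → ℝ) → ℝ → ℝ} (hψsm : ContDiff ℝ 3 (Psi ψ)) (hne : ∀ x t, ψ x t ≠ 0)
    (hR : ∀ x t, R x t = ‖ψ x t‖)
    (hQ : ∀ x t, Q x t
        = -(∑ j : Fin n, fderiv ℝ
              (fun y => fderiv ℝ (fun z => R z t) y (Pi.single j 1)) x
              (Pi.single j 1)) / (2 * R x t)) (p : (Fin n → ℝ) × ℝ) :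
    (SF ψ V p).re = -(V p.1) - Q p.1 p.2 - (1/2) * ∑ k : Fin n, (PF ψ k p)^2 := by
  obtain ⟨x, t⟩ := p
  have hRfun : (fun z => R z t) = fun z => Rf ψ (z, t) := by funext z; exact hR z t
  have hRne : ∀ y : Fin n → ℝ, Rf ψ (y,t) ≠ 0 := fun y => Rf_ne hne (y,t)
  have step1 : ∀ (y : Fin n → ℝ) (k : Fin n), fderiv ℝ (fun z => R z t) y (Pi.single k 1)
      = (uF ψ (ev k) (y,t)).re * Rf ψ (y,t) := by
    intro y k
    rw [hRfun]
    have h := hasFDerivAt_slice (p := (y,t)) (hasFDerivAt_Rf hψsm hne (y,t))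
    have happ : ((DR ψ (y,t)).comp (ContinuousLinearMap.inl ℝ (Fin n → ℝ) ℝ)) (Pi.single k 1)
        = DR ψ (y,t) (ev k) := rfl
    rw [h.fderiv, happ, ← div_mul_cancel₀ (DR ψ (y,t) (ev k)) (hRne y), ← re_uF hne (y,t) (ev k)]
  have step2 : ∀ k : Fin n, fderiv ℝ (fun y => fderiv ℝ (fun z => R z t) y (Pi.single k 1)) x (Pi.single k 1)
      = Rf ψ (x,t) * ((TF ψ (x,t) (ev k) (ev k)).re + ((uF ψ (ev k) (x,t)).re)^2) := by
    intro k
    rw [show (fun y => fderiv ℝ (fun z => R z t) y (Pi.single k 1))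
        = fun y => (uF ψ (ev k) (y,t)).re * Rf ψ (y,t) from funext (fun y => step1 y k)]
    have ha : HasFDerivAt (fun y => (uF ψ (ev k) (y,t)).re)
        ((Complex.reCLM.comp (DuF ψ (x,t) (ev k))).comp (ContinuousLinearMap.inl ℝ (Fin n → ℝ) ℝ)) x :=
      hasFDerivAt_slice (p := (x,t))
        (Complex.reCLM.hasFDerivAt.comp (x,t) (hasFDerivAt_uF hψsm hne (x,t) (ev k)))
    have hb : HasFDerivAt (fun y => Rf ψ (y,t))
        ((DR ψ (x,t)).comp (ContinuousLinearMap.inl ℝ (Fin n → ℝ) ℝ)) x :=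
      hasFDerivAt_slice (p := (x,t)) (hasFDerivAt_Rf hψsm hne (x,t))
    rw [(ha.fun_mul hb).fderiv]
    have h1 : (DR ψ (x,t)) (ev k) = (uF ψ (ev k) (x,t)).re * Rf ψ (x,t) := by
      rw [re_uF hne (x,t) (ev k), div_mul_cancel₀ _ (hRne x)]
    have h2 : (DuF ψ (x,t) (ev k)) (ev k) = TF ψ (x,t) (ev k) (ev k) := DuF_apply _ _ _
    have e1 : ((ContinuousLinearMap.inl ℝ (Fin n → ℝ) ℝ)) (Pi.single k 1) = ev k := rfl
    simp only [ContinuousLinearMap.add_apply, ContinuousLinearMap.smul_apply,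
      ContinuousLinearMap.coe_comp', Function.comp_apply, smul_eq_mul, Complex.reCLM_apply, e1]
    rw [h1, h2]
    ring
  have step3 : Q x t
      = -(∑ k : Fin n, ((TF ψ (x,t) (ev k) (ev k)).re + ((uF ψ (ev k) (x,t)).re)^2))/2 := by
    rw [hQ x t, Finset.sum_congr rfl (fun k _ => step2 k), ← Finset.mul_sum,
      show R x t = Rf ψ (x,t) from hR x t]
    field_simp [hRne x]
  have step4 : (SF ψ V (x,t)).re
      = (1/2) * (∑ k : Fin n, ((TF ψ (x,t) (ev k) (ev k)).re
          + (((uF ψ (ev k) (x,t)).re)^2 - ((uF ψ (ev k) (x,t)).im)^2))) - V x := by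
    rw [SF]
    simp [Complex.mul_re, Complex.re_sum, Complex.add_re, sq, Complex.mul_im]
    try rw [Finset.sum_add_distrib]
    try ring
  rw [step4, step3]
  simp only [PF]
  rw [Finset.sum_add_distrib, Finset.sum_sub_distrib, Finset.sum_add_distrib]
  ring
lemma linear_ode_zero_nonneg {n : ℕ} {g : ℝ → Fin n → ℝ} {A : ℝ → Fin n → Fin n → ℝ}
    (hA : ∀ j k, Continuous fun t => A t j k)
    (hg : ∀ t, HasDerivAt g (fun j => -∑ k, A t j k * g t k) t)
    (h0 : g 0 = 0) (t : ℝ) (ht : 0 ≤ t) : g t = 0 := by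
  classical
  set K : ℝ → ℝ := fun s => ∑ j, ∑ k, |A s j k| with hK
  have hKcont : Continuous K := by
    apply continuous_finset_sum
    intro j _
    apply continuous_finset_sum
    intro k _
    exact (hA j k).abs
  have hKnn : ∀ s, 0 ≤ K s := fun s =>
    Finset.sum_nonneg fun j _ => Finset.sum_nonneg fun k _ => abs_nonneg _
  obtain ⟨s0, hs0mem, hs0⟩ :=
    isCompact_Icc.exists_isMaxOn (⟨0, by simp [ht]⟩ : (Set.Icc (0:ℝ) t).Nonempty)
      hKcont.continuousOn
  set Kc := K s0 with hKc
  have hgc : Continuous g := by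
    rw [continuous_iff_continuousAt]; exact fun s => (hg s).continuousAt
  have bound : ∀ s ∈ Set.Ico (0:ℝ) t,
      ‖(fun j => -∑ k, A s j k * g s k : Fin n → ℝ)‖ ≤ Kc * ‖g s‖ + 0 := by
    intro s hs
    rw [add_zero]
    have hKcnn : 0 ≤ Kc := hKnn s0
    rw [pi_norm_le_iff_of_nonneg (mul_nonneg hKcnn (norm_nonneg _))]
    intro j
    rw [Real.norm_eq_abs, abs_neg]
    calc |∑ k, A s j k * g s k| ≤ ∑ k, |A s j k * g s k| := Finset.abs_sum_le_sum_abs _ _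
      _ ≤ ∑ k, |A s j k| * ‖g s‖ := by
          apply Finset.sum_le_sum
          intro k _
          rw [abs_mul]
          exact mul_le_mul_of_nonneg_left
            (by simpa [Real.norm_eq_abs] using norm_le_pi_norm (g s) k) (abs_nonneg _)
      _ = (∑ k, |A s j k|) * ‖g s‖ := by rw [Finset.sum_mul]
      _ ≤ K s * ‖g s‖ := by
          apply mul_le_mul_of_nonneg_right _ (norm_nonneg _)
          exact Finset.single_le_sum (f := fun j => ∑ k, |A s j k|)
            (fun j _ => Finset.sum_nonneg fun k _ => abs_nonneg _) (Finset.mem_univ j)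
      _ ≤ Kc * ‖g s‖ := mul_le_mul_of_nonneg_right
            (hs0 (Set.mem_Icc.2 ⟨hs.1, le_of_lt hs.2⟩)) (norm_nonneg _)
  have main := norm_le_gronwallBound_of_norm_deriv_right_le (δ := 0) (K := Kc) (ε := 0)
    (hgc.continuousOn) (fun s _ => (hg s).hasDerivWithinAt) (by simp [h0]) bound
  have := main t (Set.right_mem_Icc.2 ht)
  rw [gronwallBound_ε0] at this
  simp only [zero_mul] at this
  exact norm_le_zero_iff.1 this

lemma linear_ode_zero {n : ℕ} {g : ℝ → Fin n → ℝ} {A : ℝ → Fin n → Fin n → ℝ}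
    (hA : ∀ j k, Continuous fun t => A t j k)
    (hg : ∀ t, HasDerivAt g (fun j => -∑ k, A t j k * g t k) t)
    (h0 : g 0 = 0) (t : ℝ) : g t = 0 := by
  rcases le_or_gt 0 t with ht | ht
  · exact linear_ode_zero_nonneg hA hg h0 t ht
  · have hg' : ∀ s, HasDerivAt (fun r => g (-r))
        (fun j => -∑ k, (-A (-s) j k) * g (-(s:ℝ)) k) s := by
      intro s
      have h1 : HasDerivAt (fun r : ℝ => -r) (-1) s := (hasDerivAt_id s).neg
      have h2 := (hg (-s)).scomp s h1
      refine h2.congr_deriv ?_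
      funext j
      simp
    have h0' : (fun r : ℝ => g (-r)) 0 = 0 := by simpa using h0
    have hA' : ∀ j k, Continuous fun s : ℝ => -A (-s) j k := fun j k =>
      ((hA j k).comp continuous_neg).neg
    have := linear_ode_zero_nonneg (A := fun s j k => -A (-s) j k) hA' hg' h0' (-t)
      (by linarith)
    simpa using this

end S15
open S15

/-- under the same hypotheses as theorem 4.2 (statement 14), if
`(x(t), mom(t))` is any solution of Hamilton's equations for
`h = (1/2)|π|² + V + Q_ψ`, then `δπ(t) = mom(t) − p_B(x(t),t)` satisfies the
linear ODE `d(δπ_j)/dt = −Σ_k ∂_k p_{B,j}(x(t),t)·δπ_k(t)`; in particular if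
`mom(0) = p_B(x(0),0)` then `mom(t) = p_B(x(t),t)` for all `t`. -/
theorem stmt_15 {n : ℕ} (ψ : (Fin n → ℝ) → ℝ → ℂ) (V : (Fin n → ℝ) → ℝ)
    (hψsm : ContDiff ℝ 3 (fun q : (Fin n → ℝ) × ℝ => ψ q.1 q.2))
    (hV : ContDiff ℝ 1 V)
    (hne : ∀ x t, ψ x t ≠ 0)
    (R : (Fin n → ℝ) → ℝ → ℝ)
    (hR : ∀ x t, R x t = ‖ψ x t‖)
    (Q : (Fin n → ℝ) → ℝ → ℝ)
    (hQ : ∀ x t, Q x t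
        = -(∑ j : Fin n, fderiv ℝ
              (fun y => fderiv ℝ (fun z => R z t) y (Pi.single j 1)) x
              (Pi.single j 1)) / (2 * R x t))
    (pB : (Fin n → ℝ) → ℝ → Fin n → ℝ)
    (hpB : ∀ x t j, pB x t j
        = ((fderiv ℝ (fun y => ψ y t) x (Pi.single j 1)) / ψ x t).im)
    (hSch : ∀ x t, Complex.I * deriv (fun s => ψ x s) t
        = -(1 / 2) * (∑ j : Fin n, fderiv ℝ
              (fun y => fderiv ℝ (fun z => ψ z t) y (Pi.single j 1)) x
              (Pi.single j 1))
          + (V x : ℂ) * ψ x t)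
    (x : ℝ → Fin n → ℝ) (mom : ℝ → Fin n → ℝ)
    (hx : ∀ t j, HasDerivAt (fun s => x s j) (mom t j) t)
    (hmom : ∀ t (j : Fin n), HasDerivAt (fun s => mom s j)
        (-(fderiv ℝ (fun y => V y + Q y t) (x t) (Pi.single j 1))) t) :
    (∀ t (j : Fin n),
      HasDerivAt (fun s => mom s j - pB (x s) s j)
        (-(∑ k : Fin n, fderiv ℝ (fun y => pB y t j) (x t) (Pi.single k 1)
            * (mom t k - pB (x t) t k))) t) ∧
    ((∀ j, mom 0 j = pB (x 0) 0 j) → ∀ t j, mom t j = pB (x t) t j) := by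
  have hsm : ContDiff ℝ 3 (Psi ψ) := hψsm
  have hpB' : ∀ (y : Fin n → ℝ) (s : ℝ) (k : Fin n), pB y s k = PF ψ k (y, s) := by
    intro y s k
    rw [hpB y s k, PF, uF, slice_G hsm y s (Pi.single k 1)]
    rfl
  have hcoef : ∀ (x' : Fin n → ℝ) (t' : ℝ) (j k : Fin n),
      fderiv ℝ (fun y => pB y t' j) x' (Pi.single k 1) = (TF ψ (x',t') (ev k) (ev j)).im := by
    intro x' t' j k
    rw [show (fun y => pB y t' j) = fun y => PF ψ j (y, t') from funext (fun y => hpB' y t' j)]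
    rw [(hasFDerivAt_slice (p := (x',t')) (hasFDerivAt_PF hsm hne j (x',t'))).fderiv]
    show (DuF ψ (x',t') (ev j) (ev k)).im = _
    rw [DuF_apply]
  have main : ∀ t (j : Fin n), HasDerivAt (fun s => mom s j - pB (x s) s j)
      (-(∑ k : Fin n, fderiv ℝ (fun y => pB y t j) (x t) (Pi.single k 1)
          * (mom t k - pB (x t) t k))) t := by
    intro t j
    set p : (Fin n → ℝ) × ℝ := (x t, t) with hp
    -- derivative of SF
    have hSFfun : SF ψ V = fun q => (-Complex.I) * uF ψ (eT n) q := by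
      funext q
      rw [schU hsm hne hSch q]
      linear_combination (SF ψ V q) * Complex.I_sq
    have hSF : HasFDerivAt (SF ψ V) ((-Complex.I) • DuF ψ p (eT n)) p := by
      rw [hSFfun]
      exact (hasFDerivAt_uF hsm hne p (eT n)).const_mul (-Complex.I)
    -- Q as a nice function of y
    have hQslice : (fun y => Q y t) = fun y =>
        -(SF ψ V (y,t)).re - V y - (1/2) * ∑ k : Fin n, PF ψ k (y,t)^2 := by
      funext y
      have := KEY (V := V) hsm hne hR hQ (y,t)
      simp only at this ⊢
      linarith [this]
    have hRS : HasFDerivAt (fun y => (SF ψ V (y,t)).re)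
        ((Complex.reCLM.comp ((-Complex.I) • DuF ψ p (eT n))).comp
          (ContinuousLinearMap.inl ℝ (Fin n → ℝ) ℝ)) (x t) :=
      hasFDerivAt_slice (p := p) (Complex.reCLM.hasFDerivAt.comp p hSF)
    have hPk : ∀ k : Fin n, HasFDerivAt (fun y => PF ψ k (y,t))
        ((Complex.imCLM.comp (DuF ψ p (ev k))).comp
          (ContinuousLinearMap.inl ℝ (Fin n → ℝ) ℝ)) (x t) :=
      fun k => hasFDerivAt_slice (p := p) (hasFDerivAt_PF hsm hne k p)
    have hsq : ∀ k : Fin n, HasFDerivAt (fun y => PF ψ k (y,t)^2)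
        (PF ψ k p • ((Complex.imCLM.comp (DuF ψ p (ev k))).comp
            (ContinuousLinearMap.inl ℝ (Fin n → ℝ) ℝ))
          + PF ψ k p • ((Complex.imCLM.comp (DuF ψ p (ev k))).comp
            (ContinuousLinearMap.inl ℝ (Fin n → ℝ) ℝ))) (x t) := by
      intro k
      have h2 := (hPk k).mul (hPk k)
      rw [show (fun y => PF ψ k (y,t)^2) = fun y => PF ψ k (y,t) * PF ψ k (y,t) from
        funext (fun y => sq (PF ψ k (y,t)))]
      exact h2
    have hsumsq : HasFDerivAt (fun y => ∑ k : Fin n, PF ψ k (y,t)^2)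
        (∑ k : Fin n, (PF ψ k p • ((Complex.imCLM.comp (DuF ψ p (ev k))).comp
            (ContinuousLinearMap.inl ℝ (Fin n → ℝ) ℝ))
          + PF ψ k p • ((Complex.imCLM.comp (DuF ψ p (ev k))).comp
            (ContinuousLinearMap.inl ℝ (Fin n → ℝ) ℝ)))) (x t) :=
      HasFDerivAt.fun_sum (fun k _ => hsq k)
    have hVd : HasFDerivAt V (fderiv ℝ V (x t)) (x t) :=
      (hV.differentiable one_ne_zero (x t)).hasFDerivAt
    have hQd := ((hRS.fun_neg).fun_sub hVd).fun_sub (hsumsq.const_mul ((1:ℝ)/2))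
    rw [← hQslice] at hQd
    have hVQ := hVd.fun_add hQd
    -- the curve and composition
    have hcurve : HasDerivAt (fun s => ((x s, s) : (Fin n → ℝ) × ℝ))
        ((mom t, 1) : (Fin n → ℝ) × ℝ) t :=
      (hasDerivAt_pi.2 (fun k => hx t k)).prodMk (hasDerivAt_id t)
    have hPcomp : HasDerivAt (fun s => PF ψ j (x s, s))
        ((Complex.imCLM.comp (DuF ψ p (ev j))) (mom t, 1)) t := by
      have := (hasFDerivAt_PF hsm hne j p).comp_hasDerivAt_of_eq t hcurve hp
      exact this
    have hδ := (hmom t j).sub hPcomp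
    rw [show (fun s => mom s j - pB (x s) s j) = fun s => mom s j - PF ψ j (x s, s) from
      funext (fun s => by rw [hpB' (x s) s j])]
    convert! hδ using 1
    -- now the value computation
    have hsplit : ((mom t, (1:ℝ)) : (Fin n → ℝ) × ℝ) = (∑ k : Fin n, mom t k • ev k) + eT n := by
      refine Prod.ext ?_ ?_
      · show mom t = (∑ k : Fin n, mom t k • ev k).1 + (eT n).1
        rw [Prod.fst_sum]
        funext i
        simp [ev, eT, Pi.single_apply, Finset.sum_apply]
      · show (1:ℝ) = (∑ k : Fin n, mom t k • ev k).2 + (eT n).2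
        rw [Prod.snd_sum]
        simp [ev, eT]
    rw [hVQ.fderiv]
    have hsum1 : (∑ k : Fin n, fderiv ℝ (fun y => pB y t j) (x t) (Pi.single k 1)
        * (mom t k - pB (x t) t k))
        = ∑ k : Fin n, (TF ψ p (ev k) (ev j)).im * (mom t k - PF ψ k p) := by
      apply Finset.sum_congr rfl
      intro k _
      rw [hcoef (x t) t j k, hpB' (x t) t k]
    rw [hsum1, hsplit, map_add, map_sum]
    simp only [ev, eT, map_smul, smul_eq_mul, ContinuousLinearMap.add_apply,
      ContinuousLinearMap.coe_sub', ContinuousLinearMap.coe_comp', Pi.sub_apply,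
      Function.comp_apply, ContinuousLinearMap.neg_apply, ContinuousLinearMap.smul_apply,
      ContinuousLinearMap.coe_sum', Finset.sum_apply, ContinuousLinearMap.inl_apply,
      Complex.imCLM_apply, Complex.reCLM_apply, DuF_apply, neg_mul, Complex.mul_re,
      Complex.neg_re, Complex.neg_im, Complex.I_re, Complex.I_im, zero_mul, one_mul, mul_zero,
      zero_sub, sub_zero, neg_neg, smul_eq_mul]
    have e1 : ∀ k : Fin n, (TF ψ p (Pi.single j 1, (0:ℝ)) (Pi.single k 1, (0:ℝ))).im
        = (TF ψ p (Pi.single k 1, (0:ℝ)) (Pi.single j 1, (0:ℝ))).im :=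
      fun k => by rw [TF_symm hsm]
    have e2 : (TF ψ p ((0 : Fin n → ℝ), (1:ℝ)) (Pi.single j 1, (0:ℝ))).im
        = (TF ψ p (Pi.single j 1, (0:ℝ)) ((0 : Fin n → ℝ), (1:ℝ))).im := by
      rw [TF_symm hsm]
    simp only [e1, e2]
    have e3 : (∑ k : Fin n, (TF ψ p (Pi.single k 1, (0:ℝ)) (Pi.single j 1, (0:ℝ))).im
          * (mom t k - PF ψ k p))
        = (∑ k : Fin n, mom t k * (TF ψ p (Pi.single k 1, (0:ℝ)) (Pi.single j 1, (0:ℝ))).im)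
          - ∑ k : Fin n, PF ψ k p * (TF ψ p (Pi.single k 1, (0:ℝ)) (Pi.single j 1, (0:ℝ))).im := by
      rw [← Finset.sum_sub_distrib]
      apply Finset.sum_congr rfl
      intro k _
      ring
    have e4 : (∑ k : Fin n, (PF ψ k p * (TF ψ p (Pi.single k 1, (0:ℝ)) (Pi.single j 1, (0:ℝ))).im
          + PF ψ k p * (TF ψ p (Pi.single k 1, (0:ℝ)) (Pi.single j 1, (0:ℝ))).im))
        = 2 * ∑ k : Fin n, PF ψ k p * (TF ψ p (Pi.single k 1, (0:ℝ)) (Pi.single j 1, (0:ℝ))).im := by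
      rw [Finset.mul_sum]
      apply Finset.sum_congr rfl
      intro k _
      ring
    rw [e3, e4]
    ring
  refine ⟨main, ?_⟩
  intro h0 t j
  classical
  set g : ℝ → Fin n → ℝ := fun s k => mom s k - pB (x s) s k with hg
  set A : ℝ → Fin n → Fin n → ℝ :=
    fun t j k => fderiv ℝ (fun y => pB y t j) (x t) (Pi.single k 1) with hA
  have hgd : ∀ t, HasDerivAt g (fun j => -∑ k, A t j k * g t k) t := by
    intro t
    apply hasDerivAt_pi.2
    intro j
    have := main t j
    simpa [hA, hg, neg_eq_iff_eq_neg] using this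
  have hxc : Continuous x := by
    apply continuous_pi
    intro k
    have : Differentiable ℝ (fun s => x s k) := fun s => (hx s k).differentiableAt
    exact this.continuous
  have hAc : ∀ j k, Continuous fun t => A t j k := by
    intro j k
    have h1 : (fun t => A t j k) = fun t => (TF ψ (x t, t) (ev k) (ev j)).im := by
      funext t; rw [hA]; exact hcoef (x t) t j k
    rw [h1]
    exact Complex.continuous_im.comp
      ((continuous_TF hsm hne (ev k) (ev j)).comp (hxc.prodMk continuous_id))
  have h0' : g 0 = 0 := by
    funext k
    simp [hg, h0 k]
  have := linear_ode_zero hAc hgd h0' t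
  have := congrFun this j
  simpa [hg, sub_eq_zero] using this
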